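/- arXiv:1901.04755 — 2 statements merged into one kernel-verified Lean document; each statement's English description precedes it below -/
import Mathlib

section
/- Let μ_ε be a sequence of finite E-valued Radon measures on Ω with sup_ε |μ_ε|(Ω) < ∞ which two-scale converges to κ ⊗ θ_x (with κ a positive measure on Ω̄ and θ a weak-* κ-measurable map into M(Z;E)). Then the total variation of the limit satisfies (κ ⊗ |θ_x|)(Ω̄ × Z) ≤ liminf_{ε↓0} |μ_ε|(Ω). -/
open MeasureTheory Filter Topology

lemma aux_sum_mul_prod_le {ι : Type*} [DecidableEq ι] (a : ι → ℝ) (h0 : ∀ i, 0 ≤ a i)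
    (h1 : ∀ i, a i ≤ 1) (s : Finset ι) :
    ∑ i ∈ s, a i * ∏ j ∈ s.erase i, (1 - a j) ≤ 1 - ∏ j ∈ s, (1 - a j) := by
  induction s using Finset.induction_on with
  | empty => simp
  | @insert k s hk IH =>
    have hQ0 : (0:ℝ) ≤ ∏ j ∈ s, (1 - a j) :=
      Finset.prod_nonneg fun j _ => by linarith [h1 j]
    have hQ1 : ∏ j ∈ s, (1 - a j) ≤ 1 :=
      Finset.prod_le_one (fun j _ => by linarith [h1 j]) (fun j _ => by linarith [h0 j])
    rw [Finset.sum_insert hk, Finset.erase_insert hk, Finset.prod_insert hk]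
    have hsum : ∑ i ∈ s, a i * ∏ j ∈ (insert k s).erase i, (1 - a j)
        = (1 - a k) * ∑ i ∈ s, a i * ∏ j ∈ s.erase i, (1 - a j) := by
      rw [Finset.mul_sum]
      refine Finset.sum_congr rfl fun i hi => ?_
      have hik : i ≠ k := fun h => hk (h ▸ hi)
      rw [Finset.erase_insert_of_ne hik.symm,
        Finset.prod_insert (fun h => hk (Finset.erase_subset _ _ h))]
      ring
    rw [hsum]
    have hS0 : (0:ℝ) ≤ ∑ i ∈ s, a i * ∏ j ∈ s.erase i, (1 - a j) :=
      Finset.sum_nonneg fun i _ => mul_nonneg (h0 i)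
        (Finset.prod_nonneg fun j _ => by linarith [h1 j])
    nlinarith [h0 k, h1 k, IH]

lemma aux_exists_partition {X : Type*} [MeasurableSpace X] [TopologicalSpace X]
    [OpensMeasurableSpace X] [NormalSpace X]
    {E : Type*} [NormedAddCommGroup E] [NormedSpace ℝ E] [CompleteSpace E]
    (Λ : Measure X) [IsFiniteMeasure Λ] [Λ.WeaklyRegular]
    (P : X → E) (hPm : AEStronglyMeasurable P Λ) (hP1 : ∀ᵐ x ∂Λ, ‖P x‖ = 1)
    {δ : ℝ} (hδ : 0 < δ) :
    ∃ (s : Finset E) (ψ : E → X → ℝ),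
      (∀ c ∈ s, Continuous (ψ c)) ∧ (∀ c ∈ s, ∀ x, 0 ≤ ψ c x) ∧
      (∀ x, ∑ c ∈ s, ψ c x ≤ 1) ∧
      (Λ Set.univ).toReal ≤ ∑ c ∈ s, ‖∫ x, ψ c x • P x ∂Λ‖ + δ := by
  classical
  -- P is integrable
  have hPint : Integrable P Λ :=
    Integrable.mono' (integrable_const 1) hPm (hP1.mono fun x hx => le_of_eq hx)
  have hPmem : MemLp P 1 Λ := memLp_one_iff_integrable.2 hPint
  -- simple function approximation in L¹
  have hδ4 : ENNReal.ofReal (δ / 4) ≠ 0 := by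
    simp [ENNReal.ofReal_eq_zero, not_le]; linarith
  obtain ⟨g, hg, hgmem⟩ := hPmem.exists_simpleFunc_eLpNorm_sub_lt ENNReal.one_ne_top hδ4
  have hgint : Integrable (⇑g) Λ := memLp_one_iff_integrable.1 hgmem
  have hPgint : Integrable (fun x => P x - g x) Λ := hPint.sub hgint
  have hPgm : AEStronglyMeasurable (fun x => P x - g x) Λ :=
    hPm.sub g.stronglyMeasurable.aestronglyMeasurable
  set η : ℝ := ∫ x, ‖P x - g x‖ ∂Λ with hη_def
  have hη0 : 0 ≤ η := integral_nonneg fun x => norm_nonneg _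
  have hηlt : η < δ / 4 := by
    have : η = (eLpNorm (fun x => P x - g x) 1 Λ).toReal := by
      rw [hη_def, integral_norm_eq_lintegral_enorm hPgm, eLpNorm_one_eq_lintegral_enorm]
    rw [this]
    exact ENNReal.toReal_lt_of_lt_ofReal (by exact hg)
  set s : Finset E := g.range with hs_def
  set n : ℕ := s.card with hn_def
  set δ' : ℝ := δ / (4 * (n + 1)) with hδ'_def
  have hδ'pos : 0 < δ' := by positivity
  have hδ'e : ENNReal.ofReal δ' ≠ 0 := by simp [ENNReal.ofReal_eq_zero, not_le, hδ'pos]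
  -- fibers
  set A : E → Set X := fun c => ⇑g ⁻¹' {c} with hA_def
  have hAmeas : ∀ c, MeasurableSet (A c) := fun c => g.measurableSet_fiber c
  have hAdisj : ∀ c c', c ≠ c' → Disjoint (A c) (A c') := by
    intro c c' hcc
    simp only [Set.disjoint_left, hA_def, Set.mem_preimage, Set.mem_singleton_iff]
    intro x hx hx'; exact hcc (hx ▸ hx'.symm ▸ rfl)
  -- closed inner approximation
  have h1 : ∀ c : E, ∃ F : Set X, F ⊆ A c ∧ IsClosed F ∧ Λ (A c \ F) < ENNReal.ofReal δ' :=
    fun c => (hAmeas c).exists_isClosed_diff_lt (measure_ne_top _ _) hδ'e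
  choose F hFsub hFclosed hFlt using h1
  have hFdisj : ∀ c c', c ≠ c' → Disjoint (F c) (F c') :=
    fun c c' h => (hAdisj c c' h).mono (hFsub c) (hFsub c')
  -- open outer approximation, disjoint from the other closed pieces
  have h2 : ∀ c : E, ∃ U : Set X, IsOpen U ∧ F c ⊆ U ∧ Λ (U \ F c) < ENNReal.ofReal δ' ∧
      ∀ c' ∈ s.erase c, Disjoint U (F c') := by
    intro c
    obtain ⟨V, hFV, hVopen, hVlt⟩ := (F c).exists_isOpen_lt_add (μ := Λ) (measure_ne_top _ _) hδ'e
    set T : Set X := ⋃ c' ∈ s.erase c, F c' with hT_def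
    have hTclosed : IsClosed T := isClosed_biUnion_finset fun c' _ => hFclosed c'
    refine ⟨V ∩ Tᶜ, hVopen.inter hTclosed.isOpen_compl, ?_, ?_, ?_⟩
    · intro x hx
      refine ⟨hFV hx, ?_⟩
      simp only [hT_def, Set.mem_compl_iff, Set.mem_iUnion, not_exists]
      intro c' hc'
      exact fun hxF => (hFdisj c c' (Finset.ne_of_mem_erase hc').symm).le_bot ⟨hx, hxF⟩
    · have h1 : Λ ((V ∩ Tᶜ) \ F c) ≤ Λ (V \ F c) :=
        measure_mono (Set.diff_subset_diff_left Set.inter_subset_left)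
      exact lt_of_le_of_lt h1 (measure_diff_lt_of_lt_add
        (hFclosed c).measurableSet.nullMeasurableSet hFV (measure_ne_top _ _) hVlt)
    · intro c' hc'
      refine Set.disjoint_left.2 fun x hx hxF => ?_
      have : x ∈ Tᶜ := hx.2
      exact this (Set.mem_biUnion hc' hxF)
  choose U hUopen hFU hUlt hUdisj using h2
  -- Urysohn functions
  have h3 : ∀ c : E, ∃ φ : C(X, ℝ), Set.EqOn φ 0 (U c)ᶜ ∧ Set.EqOn φ 1 (F c) ∧
      ∀ x, φ x ∈ Set.Icc (0:ℝ) 1 := by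
    intro c
    exact exists_continuous_zero_one_of_isClosed (hUopen c).isClosed_compl (hFclosed c)
      (by simp only [Set.disjoint_left, Set.mem_compl_iff]; exact fun x hx hxF => hx (hFU c hxF))
  choose φ hφ0 hφ1 hφIcc using h3
  -- the partition functions
  set ψ : E → X → ℝ := fun c x => φ c x * ∏ c' ∈ s.erase c, (1 - φ c' x) with hψ_def
  have hψcont : ∀ c ∈ s, Continuous (ψ c) := by
    intro c _
    exact ((φ c).continuous).mul
      (continuous_finset_prod _ fun c' _ => continuous_const.sub (φ c').continuous)
  have hψ0 : ∀ c ∈ s, ∀ x, 0 ≤ ψ c x := by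
    intro c _ x
    exact mul_nonneg (hφIcc c x).1
      (Finset.prod_nonneg fun c' _ => by linarith [(hφIcc c' x).2])
  have hψsum : ∀ x, ∑ c ∈ s, ψ c x ≤ 1 := by
    intro x
    have := aux_sum_mul_prod_le (fun c => φ c x) (fun c => (hφIcc c x).1)
      (fun c => (hφIcc c x).2) s
    have h2' : (0:ℝ) ≤ ∏ j ∈ s, (1 - φ j x) :=
      Finset.prod_nonneg fun j _ => by linarith [(hφIcc j x).2]
    simp only [hψ_def] at *
    linarith
  refine ⟨s, ψ, hψcont, hψ0, hψsum, ?_⟩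
  -- ψ c ≤ 1 pointwise
  have hψle1 : ∀ c ∈ s, ∀ x, ψ c x ≤ 1 := by
    intro c hc x
    calc ψ c x ≤ ∑ c' ∈ s, ψ c' x :=
          Finset.single_le_sum (fun c' hc' => hψ0 c' hc' x) hc
      _ ≤ 1 := hψsum x
  -- integrability of ψ c • P
  have hψPint : ∀ c ∈ s, Integrable (fun x => ψ c x • P x) Λ := by
    intro c hc
    refine Integrable.mono' hPint.norm
      (((hψcont c hc).aestronglyMeasurable).smul hPm) ?_
    filter_upwards with x
    rw [norm_smul]
    have h1 := hψ0 c hc x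
    have h2 := hψle1 c hc x
    calc ‖ψ c x‖ * ‖P x‖ ≤ 1 * ‖P x‖ := by
          apply mul_le_mul_of_nonneg_right _ (norm_nonneg _)
          rw [Real.norm_eq_abs, abs_le]; constructor <;> linarith
      _ = ‖P x‖ := one_mul _
  have hindint : ∀ c, Integrable ((A c).indicator P) Λ :=
    fun c => hPint.indicator (hAmeas c)
  -- step (a): ‖I c - Jind c‖ ≤ 2 δ'
  have hstepa : ∀ c ∈ s,
      ‖(∫ x, ψ c x • P x ∂Λ) - ∫ x, (A c).indicator P x ∂Λ‖ ≤ 2 * δ' := by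
    intro c hc
    set B : Set X := (U c \ F c) ∪ (A c \ F c) with hB_def
    have hBmeas : MeasurableSet B :=
      (((hUopen c).measurableSet).diff (hFclosed c).measurableSet).union
        ((hAmeas c).diff (hFclosed c).measurableSet)
    have hae : ∀ᵐ x ∂Λ, ‖ψ c x • P x - (A c).indicator P x‖
        ≤ B.indicator (1 : X → ℝ) x := by
      filter_upwards [hP1] with x hx
      by_cases hxF : x ∈ F c
      · have hφc : φ c x = 1 := hφ1 c hxF
        have hψ1 : ψ c x = 1 := by
          have hz : ∀ c' ∈ s.erase c, (1:ℝ) - φ c' x = 1 := by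
            intro c' hc'
            have hcc' : c ∈ s.erase c' :=
              Finset.mem_erase.2 ⟨(Finset.ne_of_mem_erase hc').symm, hc⟩
            have hxU : x ∉ U c' :=
              fun hxU => (hUdisj c' c hcc').le_bot ⟨hxU, hxF⟩
            rw [hφ0 c' hxU]; simp
          simp only [hψ_def, hφc, one_mul]
          rw [Finset.prod_congr rfl hz]; simp
        have hxA : x ∈ A c := hFsub c hxF
        rw [hψ1, one_smul, Set.indicator_of_mem hxA, sub_self, norm_zero]
        exact Set.indicator_nonneg (fun _ _ => zero_le_one) x
      · by_cases hxU : x ∈ U c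
        · have hxB : x ∈ B := Or.inl ⟨hxU, hxF⟩
          rw [Set.indicator_of_mem hxB, Pi.one_apply]
          by_cases hxA : x ∈ A c
          · have hrw : ψ c x • P x - P x = (ψ c x - 1) • P x := by
              rw [sub_smul, one_smul]
            rw [Set.indicator_of_mem hxA, hrw, norm_smul, hx, mul_one,
              Real.norm_eq_abs, abs_le]
            constructor
            · linarith [hψ0 c hc x]
            · linarith [hψle1 c hc x]
          · rw [Set.indicator_of_notMem hxA, sub_zero, norm_smul, hx, mul_one,
              Real.norm_eq_abs, abs_le]
            constructor
            · linarith [hψ0 c hc x]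
            · linarith [hψle1 c hc x]
        · have hψz : ψ c x = 0 := by
            simp only [hψ_def, hφ0 c hxU]; simp
          rw [hψz, zero_smul, zero_sub, norm_neg]
          by_cases hxA : x ∈ A c
          · have hxB : x ∈ B := Or.inr ⟨hxA, hxF⟩
            rw [Set.indicator_of_mem hxB, Pi.one_apply, Set.indicator_of_mem hxA, hx]
          · rw [Set.indicator_of_notMem hxA, norm_zero]
            exact Set.indicator_nonneg (fun _ _ => zero_le_one) x
    have h1 : ‖(∫ x, ψ c x • P x ∂Λ) - ∫ x, (A c).indicator P x ∂Λ‖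
        ≤ ∫ x, B.indicator (1 : X → ℝ) x ∂Λ := by
      rw [← integral_sub (hψPint c hc) (hindint c)]
      refine le_trans (norm_integral_le_integral_norm _) ?_
      exact integral_mono_ae ((hψPint c hc).sub (hindint c)).norm
        ((integrable_const (1:ℝ)).indicator hBmeas) hae
    rw [integral_indicator_one hBmeas] at h1
    have h2 : Λ B ≤ ENNReal.ofReal δ' + ENNReal.ofReal δ' :=
      le_trans (measure_union_le _ _) (add_le_add (hUlt c).le (hFlt c).le)
    have h3 : (Λ B).toReal ≤ 2 * δ' := by
      have := ENNReal.toReal_mono (by finiteness) h2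
      rwa [ENNReal.toReal_add ENNReal.ofReal_ne_top ENNReal.ofReal_ne_top,
        ENNReal.toReal_ofReal hδ'pos.le, ← two_mul] at this
    rw [measureReal_def] at h1
    linarith
  -- step (b): lower bound on ‖Jind c‖
  have hstepb : ∀ c ∈ s,
      (∫ x in A c, ‖P x‖ ∂Λ) - 2 * ∫ x in A c, ‖P x - g x‖ ∂Λ
        ≤ ‖∫ x, (A c).indicator P x ∂Λ‖ := by
    intro c hc
    rw [integral_indicator (hAmeas c)]
    have hgA : ∫ x in A c, g x ∂Λ = (Λ (A c)).toReal • c := by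
      rw [setIntegral_congr_fun (hAmeas c) (fun x hx => hx), setIntegral_const]; rfl
    have hgnormA : ∫ x in A c, ‖g x‖ ∂Λ = (Λ (A c)).toReal * ‖c‖ := by
      rw [setIntegral_congr_fun (μ := Λ) (f := fun x => ‖g x‖)
        (g := fun _ => ‖c‖) (hAmeas c) (fun x hx => by
          simp only
          rw [Set.mem_preimage, Set.mem_singleton_iff] at hx
          rw [hx]),
        setIntegral_const, smul_eq_mul]; rfl
    have hsub : ∫ x in A c, (g x - P x) ∂Λ
        = (∫ x in A c, g x ∂Λ) - ∫ x in A c, P x ∂Λ :=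
      integral_sub hgint.integrableOn hPint.integrableOn
    have h1 : ‖∫ x in A c, g x ∂Λ‖ - ‖∫ x in A c, (g x - P x) ∂Λ‖
        ≤ ‖∫ x in A c, P x ∂Λ‖ := by
      have := norm_sub_norm_le (∫ x in A c, g x ∂Λ)
        ((∫ x in A c, g x ∂Λ) - ∫ x in A c, P x ∂Λ)
      simp only [sub_sub_cancel] at this
      rw [hsub]; linarith
    have h2 : ‖∫ x in A c, (g x - P x) ∂Λ‖ ≤ ∫ x in A c, ‖P x - g x‖ ∂Λ := by
      refine le_trans (norm_integral_le_integral_norm _) ?_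
      refine le_of_eq (integral_congr_ae ?_)
      filter_upwards with x using (norm_sub_rev _ _)
    have h3 : (∫ x in A c, ‖P x‖ ∂Λ) - ∫ x in A c, ‖P x - g x‖ ∂Λ
        ≤ ‖∫ x in A c, g x ∂Λ‖ := by
      rw [hgA, norm_smul, Real.norm_eq_abs, abs_of_nonneg ENNReal.toReal_nonneg,
        ← hgnormA]
      rw [← integral_sub hPint.norm.integrableOn hPgint.norm.integrableOn]
      refine integral_mono_ae ((hPint.norm.sub hPgint.norm).integrableOn)
        hgint.norm.integrableOn ?_
      filter_upwards with x
      have := norm_sub_norm_le (P x) (P x - g x)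
      simp only [sub_sub_cancel] at this
      linarith
    linarith
  -- step (c): summation identities
  have hcover : ⋃ c ∈ s, A c = Set.univ := by
    ext x
    simp only [Set.mem_iUnion, Set.mem_univ, iff_true]
    exact ⟨g x, g.mem_range_self x, rfl⟩
  have hpair : Set.Pairwise ↑s (Function.onFun Disjoint A) := fun c _ c' _ h => hAdisj c c' h
  have hsumP : ∑ c ∈ s, ∫ x in A c, ‖P x‖ ∂Λ = ∫ x, ‖P x‖ ∂Λ := by
    rw [← integral_biUnion_finset s (fun c _ => hAmeas c) hpair
      (fun c _ => hPint.norm.integrableOn), hcover, setIntegral_univ]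
  have hsumPg : ∑ c ∈ s, ∫ x in A c, ‖P x - g x‖ ∂Λ = η := by
    rw [← integral_biUnion_finset s (fun c _ => hAmeas c) hpair
      (fun c _ => hPgint.norm.integrableOn), hcover, setIntegral_univ, hη_def]
  have hPnorm : ∫ x, ‖P x‖ ∂Λ = (Λ Set.univ).toReal := by
    rw [integral_congr_ae (hP1.mono fun x hx => hx), integral_const, smul_eq_mul, mul_one]; rfl
  -- combine
  have hkey : ∑ c ∈ s, ((∫ x in A c, ‖P x‖ ∂Λ) - 2 * (∫ x in A c, ‖P x - g x‖ ∂Λ) - 2 * δ')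
      ≤ ∑ c ∈ s, ‖∫ x, ψ c x • P x ∂Λ‖ := by
    refine Finset.sum_le_sum fun c hc => ?_
    have h1 := hstepa c hc
    have h2 := hstepb c hc
    have h3 := norm_sub_norm_le (∫ x, (A c).indicator P x ∂Λ) (∫ x, ψ c x • P x ∂Λ)
    rw [norm_sub_rev] at h3
    linarith
  have hsum_eq : ∑ c ∈ s, ((∫ x in A c, ‖P x‖ ∂Λ) - 2 * (∫ x in A c, ‖P x - g x‖ ∂Λ) - 2 * δ')
      = (Λ Set.univ).toReal - 2 * η - n * (2 * δ') := by
    rw [Finset.sum_sub_distrib, Finset.sum_sub_distrib, ← Finset.mul_sum, hsumP, hsumPg,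
      hPnorm, Finset.sum_const, hn_def, nsmul_eq_mul]
  have hnδ' : (n:ℝ) * (2 * δ') ≤ δ / 2 := by
    rw [hδ'_def]
    have hn1 : (0:ℝ) < 4 * ((n:ℝ) + 1) := by positivity
    have h2 : δ / (4 * ((n:ℝ) + 1)) * (4 * ((n:ℝ) + 1)) = δ :=
      div_mul_cancel₀ δ (ne_of_gt hn1)
    have hn0 : (0:ℝ) ≤ (n:ℝ) := Nat.cast_nonneg n
    have h3 : 0 ≤ δ / (4 * ((n:ℝ) + 1)) := by positivity
    nlinarith [h2, hn0, h3]
  rw [hsum_eq] at hkey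
  linarith

/-- Lower semicontinuity of the total variation under two-scale convergence: if a
uniformly bounded sequence of `E`-valued measures `μ_ε = f_ε σ_ε` supported in `Ω`
two-scale converges to the `E`-valued measure `κ ⊗ θ_x` on `Ω̄ × Z` (represented here by
its total variation `Λ` and polar `P`), then
`(κ ⊗ |θ_x|)(Ω̄ × Z) = Λ(Ω̄ × Z) ≤ liminf |μ_ε|(Ω)`. -/
theorem stmt15 {d : ℕ} {E : Type*} [NormedAddCommGroup E] [NormedSpace ℝ E]
    [CompleteSpace E]
    (Ω : Set (Fin d → ℝ)) (hΩo : IsOpen Ω) (hΩb : Bornology.IsBounded Ω)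
    (ε : ℕ → ℝ) (hε : ∀ j, 0 < ε j) (hε0 : Tendsto ε atTop (𝓝 0))
    (σ : ℕ → Measure (Fin d → ℝ)) (hfin : ∀ j, IsFiniteMeasure (σ j))
    (hsupp : ∀ j, σ j Ωᶜ = 0)
    (f : ℕ → (Fin d → ℝ) → E) (hfm : ∀ j, AEStronglyMeasurable (f j) (σ j))
    (hfp : ∀ j, ∀ᵐ x ∂σ j, ‖f j x‖ = 1)
    (hbd : ∃ C : NNReal, ∀ j, σ j Set.univ ≤ C)
    (Λ : Measure ((Fin d → ℝ) × (Fin d → AddCircle (1 : ℝ)))) [IsFiniteMeasure Λ]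
    (P : (Fin d → ℝ) × (Fin d → AddCircle (1 : ℝ)) → E)
    (hPm : AEStronglyMeasurable P Λ) (hP : ∀ᵐ p ∂Λ, ‖P p‖ = 1)
    (htwo : ∀ Ψ : (Fin d → ℝ) × (Fin d → AddCircle (1 : ℝ)) → ℝ, Continuous Ψ →
      (∃ C, ∀ p, |Ψ p| ≤ C) →
      Tendsto
        (fun j => ∫ x, Ψ (x, fun i => (((ε j)⁻¹ * x i : ℝ) : AddCircle (1 : ℝ))) • f j x ∂σ j)
        atTop (𝓝 (∫ p, Ψ p • P p ∂Λ))) :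
    Λ Set.univ ≤ liminf (fun j => σ j Set.univ) atTop := by
  classical
  obtain ⟨C, hC⟩ := hbd
  set b : ℕ → ℝ := fun j => (σ j Set.univ).toReal with hb_def
  have hb0 : ∀ j, 0 ≤ b j := fun j => ENNReal.toReal_nonneg
  have hbbdd : IsBoundedUnder (· ≥ ·) atTop b := isBoundedUnder_of ⟨0, fun j => hb0 j⟩
  -- real version of the statement
  have hkeyreal : (Λ Set.univ).toReal ≤ liminf b atTop := by
    refine le_of_forall_pos_le_add ?_
    intro δ hδ
    obtain ⟨s, ψ, hψcont, hψ0, hψsum, hkey⟩ := aux_exists_partition Λ P hPm hP hδ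
    -- the maps x ↦ (x, x/ε_j mod ℤᵈ)
    set m : ℕ → (Fin d → ℝ) → (Fin d → ℝ) × (Fin d → AddCircle (1 : ℝ)) :=
      fun j x => (x, fun i => (((ε j)⁻¹ * x i : ℝ) : AddCircle (1 : ℝ))) with hm_def
    have hmcont : ∀ j, Continuous (m j) := by
      intro j
      refine continuous_id.prodMk (continuous_pi fun i => ?_)
      exact (AddCircle.continuous_mk' 1).comp (continuous_const.mul (continuous_apply i))
    have hψle1 : ∀ c ∈ s, ∀ p, ψ c p ≤ 1 := by
      intro c hc p
      calc ψ c p ≤ ∑ c' ∈ s, ψ c' p :=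
            Finset.single_le_sum (fun c' hc' => hψ0 c' hc' p) hc
        _ ≤ 1 := hψsum p
    have hconv : ∀ c ∈ s,
        Tendsto (fun j => ∫ x, ψ c (m j x) • f j x ∂σ j) atTop
          (𝓝 (∫ p, ψ c p • P p ∂Λ)) := by
      intro c hc
      refine htwo (ψ c) (hψcont c hc) ⟨1, fun p => ?_⟩
      rw [abs_le]
      exact ⟨by linarith [hψ0 c hc p], hψle1 c hc p⟩
    set a : ℕ → ℝ := fun j => ∑ c ∈ s, ‖∫ x, ψ c (m j x) • f j x ∂σ j‖ with ha_def
    have ha : Tendsto a atTop (𝓝 (∑ c ∈ s, ‖∫ p, ψ c p • P p ∂Λ‖)) :=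
      tendsto_finset_sum _ fun c hc => (hconv c hc).norm
    have hab : ∀ j, a j ≤ b j := by
      intro j
      have := hfin j
      have hGint : ∀ c ∈ s, Integrable (fun x => ψ c (m j x)) (σ j) := by
        intro c hc
        refine Integrable.mono' (integrable_const (1:ℝ))
          (((hψcont c hc).comp (hmcont j)).aestronglyMeasurable) ?_
        filter_upwards with x
        rw [Real.norm_eq_abs, abs_le]
        exact ⟨by linarith [hψ0 c hc (m j x)], hψle1 c hc (m j x)⟩
      have hterm : ∀ c ∈ s, ‖∫ x, ψ c (m j x) • f j x ∂σ j‖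
          ≤ ∫ x, ψ c (m j x) ∂σ j := by
        intro c hc
        refine le_trans (norm_integral_le_integral_norm _) (le_of_eq ?_)
        refine integral_congr_ae ?_
        filter_upwards [hfp j] with x hx
        rw [norm_smul, hx, mul_one, Real.norm_eq_abs, abs_of_nonneg (hψ0 c hc (m j x))]
      calc a j ≤ ∑ c ∈ s, ∫ x, ψ c (m j x) ∂σ j := Finset.sum_le_sum hterm
        _ = ∫ x, ∑ c ∈ s, ψ c (m j x) ∂σ j := (integral_finset_sum s hGint).symm
        _ ≤ ∫ x, (1:ℝ) ∂σ j := by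
            refine integral_mono (integrable_finset_sum s hGint)
              (integrable_const (1:ℝ)) fun x => hψsum (m j x)
        _ = b j := by rw [integral_const, smul_eq_mul, mul_one]; rfl
    have hbub : IsBoundedUnder (· ≤ ·) atTop b :=
      isBoundedUnder_of ⟨(C : ENNReal).toReal,
        fun j => ENNReal.toReal_mono ENNReal.coe_ne_top (hC j)⟩
    have h1 : ∑ c ∈ s, ‖∫ p, ψ c p • P p ∂Λ‖ ≤ liminf b atTop := by
      rw [← ha.liminf_eq]
      exact liminf_le_liminf (Eventually.of_forall hab)
        ha.isBoundedUnder_ge hbub.isCoboundedUnder_ge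
    linarith
  -- pass from reals to `ℝ≥0∞`
  have hLne : Λ Set.univ ≠ ⊤ := measure_ne_top Λ _
  refine (le_liminf_iff (by isBoundedDefault) (by isBoundedDefault)).mpr ?_
  intro y hy
  have hy' : y ≠ ⊤ := (hy.trans_le le_top).ne
  have hyr : y.toReal < (Λ Set.univ).toReal := (ENNReal.toReal_lt_toReal hy' hLne).2 hy
  have hylt : y.toReal < liminf b atTop := lt_of_lt_of_le hyr hkeyreal
  have hev := eventually_lt_of_lt_liminf hylt hbbdd
  filter_upwards [hev] with j hj
  have hσne : σ j Set.univ ≠ ⊤ := (lt_of_le_of_lt (hC j) ENNReal.coe_lt_top).ne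
  exact (ENNReal.toReal_lt_toReal hy' hσne).1 hj
end

section
/- Let ν be a probability measure on E with finite first moment and let h : E → ℝ be convex with linear growth at infinity, with recession function h^∞. Let ν^∞ be a probability measure on the unit sphere of E, and λ ≥ 0. Then h(⟨id, ν⟩ + λ⟨id, ν^∞⟩) ≤ ⟨h, ν⟩ + λ⟨h^∞, ν^∞⟩, where ⟨g, μ⟩ := ∫ g dμ. -/
open MeasureTheory Filter Topology

section aux

variable {E : Type*} [NormedAddCommGroup E] [NormedSpace ℝ E]

/-- shifted recession inequality: `h (a + z) ≤ h a + hinf z`. -/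
lemma aux_shift (h : E → ℝ) (hconv : ConvexOn ℝ Set.univ h)
    (hinf : E → ℝ)
    (hrec : ∀ z, Tendsto (fun t : ℝ => h (t • z) / t) atTop (𝓝 (hinf z)))
    (a z : E) : h (a + z) ≤ h a + hinf z := by
  have key : ∀ t : ℝ, 1 ≤ t →
      h (a + z) ≤ h a + ((h ((2:ℝ) • a) / 2 + h (((2*t)) • z) / 2) - h a) / t := by
    intro t ht
    have ht0 : 0 < t := lt_of_lt_of_le one_pos ht
    -- convexity: a + z = (1 - 1/t) • a + (1/t) • (a + t • z)
    have h1 : h (a + z) ≤ (1 - 1/t) * h a + (1/t) * h (a + t • z) := by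
      have := hconv.2 (Set.mem_univ a) (Set.mem_univ (a + t • z))
        (by
          have : (1:ℝ)/t ≤ 1 := by
            rw [div_le_one ht0]; exact ht
          linarith : (0:ℝ) ≤ 1 - 1/t)
        (by positivity : (0:ℝ) ≤ 1/t) (by ring)
      have heq : (1 - 1/t) • a + (1/t) • (a + t • z) = a + z := by
        rw [smul_add, smul_smul]
        rw [one_div, inv_mul_cancel₀ (ne_of_gt ht0)]
        rw [sub_smul, one_smul]
        abel_nf
        rw [one_smul]
      rw [heq] at this
      simpa [smul_eq_mul] using this
    -- midpoint: a + t • z = (1/2) • (2 • a) + (1/2) • ((2*t) • z)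
    have h2 : h (a + t • z) ≤ h ((2:ℝ) • a) / 2 + h ((2*t) • z) / 2 := by
      have := hconv.2 (Set.mem_univ ((2:ℝ) • a)) (Set.mem_univ (((2*t)) • z))
        (by norm_num : (0:ℝ) ≤ 1/2) (by norm_num : (0:ℝ) ≤ 1/2) (by norm_num)
      have heq : ((1:ℝ)/2) • ((2:ℝ) • a) + ((1:ℝ)/2) • (((2*t)) • z) = a + t • z := by
        module
      rw [heq] at this
      simp only [smul_eq_mul] at this
      linarith
    have h3 : h (a + z) ≤ (1 - 1/t) * h a + (1/t) * (h ((2:ℝ) • a) / 2 + h ((2*t) • z) / 2) := by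
      refine h1.trans ?_
      have : (1:ℝ)/t > 0 := by positivity
      nlinarith [h2]
    calc h (a + z) ≤ (1 - 1/t) * h a + (1/t) * (h ((2:ℝ) • a) / 2 + h ((2*t) • z) / 2) := h3
      _ = h a + ((h ((2:ℝ) • a) / 2 + h (((2*t)) • z) / 2) - h a) / t := by
          field_simp; ring
  -- the RHS tends to h a + hinf z
  have hlim : Tendsto (fun t : ℝ => h a + ((h ((2:ℝ) • a) / 2 + h (((2*t)) • z) / 2) - h a) / t)
      atTop (𝓝 (h a + hinf z)) := by
    have l1 : Tendsto (fun t : ℝ => h ((2*t) • z) / 2 / t) atTop (𝓝 (hinf z)) := by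
      have : Tendsto (fun t : ℝ => h ((2*t) • z) / (2*t)) atTop (𝓝 (hinf z)) := by
        have := (hrec z).comp (tendsto_id.const_mul_atTop (by norm_num : (0:ℝ) < 2))
        exact this
      convert this using 2 with t
      ring
    have l2 : Tendsto (fun t : ℝ => (h ((2:ℝ) • a) / 2 - h a) / t) atTop (𝓝 0) := by
      exact Tendsto.div_atTop tendsto_const_nhds tendsto_id
    have : Tendsto (fun t : ℝ => ((h ((2:ℝ) • a) / 2 + h (((2*t)) • z) / 2) - h a) / t)
        atTop (𝓝 (hinf z)) := by
      have := l1.add l2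
      rw [add_zero] at this
      convert this using 2 with t
      ring
    simpa using (tendsto_const_nhds.add this :
      Tendsto (fun t : ℝ => h a + ((h ((2:ℝ) • a) / 2 + h (((2*t)) • z) / 2) - h a) / t)
        atTop (𝓝 (h a + hinf z)))
  exact ge_of_tendsto hlim (eventually_atTop.2 ⟨1, key⟩)

lemma aux_zero (h : E → ℝ) (hinf : E → ℝ)
    (hrec : ∀ z, Tendsto (fun t : ℝ => h (t • z) / t) atTop (𝓝 (hinf z))) :
    hinf 0 = 0 := by
  have l1 : Tendsto (fun t : ℝ => h (t • (0:E)) / t) atTop (𝓝 0) := by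
    simp only [smul_zero]
    exact Tendsto.div_atTop tendsto_const_nhds tendsto_id
  exact tendsto_nhds_unique (hrec 0) l1

lemma aux_homog (h : E → ℝ) (hinf : E → ℝ)
    (hrec : ∀ z, Tendsto (fun t : ℝ => h (t • z) / t) atTop (𝓝 (hinf z)))
    (lam : ℝ) (hlam : 0 ≤ lam) (w : E) : hinf (lam • w) = lam * hinf w := by
  rcases eq_or_lt_of_le hlam with rfl | hpos
  · simp [aux_zero h hinf hrec]
  · have l1 : Tendsto (fun t : ℝ => h (t • (lam • w)) / t) atTop (𝓝 (lam * hinf w)) := by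
      have base : Tendsto (fun s : ℝ => h (s • w) / s) atTop (𝓝 (hinf w)) := hrec w
      have comp := base.comp (tendsto_id.const_mul_atTop hpos : Tendsto (fun t : ℝ => lam * t) atTop atTop)
      have := comp.const_mul lam
      convert this using 2 with t
      simp only [Function.comp]
      rw [smul_smul]
      rw [mul_comm t lam]
      rcases eq_or_ne t 0 with rfl | ht
      · simp
      · field_simp
    exact tendsto_nhds_unique (hrec (lam • w)) l1

lemma aux_bound (h : E → ℝ) (M : ℝ) (hgrowth : ∀ z, |h z| ≤ M * (1 + ‖z‖))
    (hinf : E → ℝ)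
    (hrec : ∀ z, Tendsto (fun t : ℝ => h (t • z) / t) atTop (𝓝 (hinf z)))
    (z : E) : |hinf z| ≤ M * ‖z‖ := by
  have l1 : Tendsto (fun t : ℝ => |h (t • z) / t|) atTop (𝓝 |hinf z|) := (hrec z).abs
  have l2 : Tendsto (fun t : ℝ => M / t + M * ‖z‖) atTop (𝓝 (M * ‖z‖)) := by
    have := (Tendsto.div_atTop (tendsto_const_nhds (x := M)) tendsto_id).add
      (tendsto_const_nhds (x := M * ‖z‖))
    simpa using this
  refine le_of_tendsto_of_tendsto l1 l2 ?_
  filter_upwards [eventually_gt_atTop (0:ℝ)] with t ht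
  have : |h (t • z)| ≤ M * (1 + t * ‖z‖) := by
    have := hgrowth (t • z)
    rwa [norm_smul, Real.norm_eq_abs, abs_of_pos ht] at this
  rw [abs_div, abs_of_pos ht, div_le_iff₀ ht]
  calc |h (t • z)| ≤ M * (1 + t * ‖z‖) := this
    _ ≤ (M / t + M * ‖z‖) * t := by apply le_of_eq; rw [add_mul, div_mul_cancel₀ M ht.ne']; ring

lemma aux_convex (h : E → ℝ) (hconv : ConvexOn ℝ Set.univ h) (hinf : E → ℝ)
    (hrec : ∀ z, Tendsto (fun t : ℝ => h (t • z) / t) atTop (𝓝 (hinf z))) :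
    ConvexOn ℝ Set.univ hinf := by
  refine ⟨convex_univ, fun x _ y _ a b ha hb hab => ?_⟩
  have lhs : Tendsto (fun t : ℝ => h (t • (a • x + b • y)) / t) atTop (𝓝 (hinf (a • x + b • y))) :=
    hrec _
  have rhs : Tendsto (fun t : ℝ => a * (h (t • x) / t) + b * (h (t • y) / t)) atTop
      (𝓝 (a * hinf x + b * hinf y)) := ((hrec x).const_mul a).add ((hrec y).const_mul b)
  refine le_of_tendsto_of_tendsto lhs rhs ?_
  filter_upwards [eventually_gt_atTop (0:ℝ)] with t ht
  have : h (t • (a • x + b • y)) ≤ a * h (t • x) + b * h (t • y) := by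
    have := hconv.2 (Set.mem_univ (t • x)) (Set.mem_univ (t • y)) ha hb hab
    have heq : a • (t • x) + b • (t • y) = t • (a • x + b • y) := by
      simp [smul_smul, smul_add, mul_comm]
    rw [heq] at this
    simpa [smul_eq_mul] using this
  calc h (t • (a • x + b • y)) / t ≤ (a * h (t • x) + b * h (t • y)) / t := by
        gcongr
    _ = a * (h (t • x) / t) + b * (h (t • y) / t) := by ring

end aux

/-- Combined Jensen inequality for generalized Young measures: for a probability
measure `ν` on `E` with finite first moment, a probability measure `ν^∞` on the unit
sphere, `λ ≥ 0`, and a convex `h` with linear growth and recession function `h^∞`, one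
has `h(⟨id,ν⟩ + λ⟨id,ν^∞⟩) ≤ ⟨h,ν⟩ + λ⟨h^∞,ν^∞⟩`. -/
theorem stmt16 {E : Type*} [NormedAddCommGroup E] [NormedSpace ℝ E]
    [FiniteDimensional ℝ E] [MeasurableSpace E] [BorelSpace E]
    (ν νinf : Measure E) [IsProbabilityMeasure ν] [IsProbabilityMeasure νinf]
    (hmom : Integrable (fun z : E => z) ν)
    (hsph : ∀ᵐ z ∂νinf, ‖z‖ = 1)
    (h : E → ℝ) (hconv : ConvexOn ℝ Set.univ h)
    (M : ℝ) (hM : 0 < M) (hgrowth : ∀ z, |h z| ≤ M * (1 + ‖z‖))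
    (hinf : E → ℝ)
    (hrec : ∀ z, Tendsto (fun t : ℝ => h (t • z) / t) atTop (𝓝 (hinf z)))
    (lam : ℝ) (hlam : 0 ≤ lam) :
    h ((∫ z, z ∂ν) + lam • ∫ z, z ∂νinf) ≤ (∫ z, h z ∂ν) + lam * ∫ z, hinf z ∂νinf := by
  have hcont : Continuous h := by
    exact continuousOn_univ.mp (hconv.continuousOn isOpen_univ)
  have hinfconv : ConvexOn ℝ Set.univ hinf := aux_convex h hconv hinf hrec
  have hinfcont : Continuous hinf := by
    exact continuousOn_univ.mp (hinfconv.continuousOn isOpen_univ)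
  -- integrability
  have hintν : Integrable h ν := by
    refine Integrable.mono' ((integrable_const M).add (hmom.norm.const_mul M))
      hcont.aestronglyMeasurable ?_
    filter_upwards with z
    simpa [Real.norm_eq_abs, mul_add] using hgrowth z
  have hidνinf : Integrable (fun z : E => z) νinf := by
    refine Integrable.mono' (integrable_const (1:ℝ)) aestronglyMeasurable_id ?_
    filter_upwards [hsph] with z hz
    simp [hz]
  have hinfint : Integrable hinf νinf := by
    refine Integrable.mono' (integrable_const M) hinfcont.aestronglyMeasurable ?_
    filter_upwards [hsph] with z hz
    have := aux_bound h M hgrowth hinf hrec z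
    rw [hz, mul_one] at this
    simpa [Real.norm_eq_abs] using this
  -- Jensen for h w.r.t. ν
  have jensen1 : h (∫ z, z ∂ν) ≤ ∫ z, h z ∂ν := by
    have := hconv.map_integral_le (s := Set.univ) (hcont.continuousOn) isClosed_univ
      (Filter.Eventually.of_forall fun _ => Set.mem_univ _) hmom (by exact hintν)
    simpa using this
  -- Jensen for hinf w.r.t. νinf
  have jensen2 : hinf (∫ z, z ∂νinf) ≤ ∫ z, hinf z ∂νinf := by
    have := hinfconv.map_integral_le (s := Set.univ) (hinfcont.continuousOn) isClosed_univ
      (Filter.Eventually.of_forall fun _ => Set.mem_univ _) hidνinf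
      (by exact hinfint)
    simpa using this
  calc h ((∫ z, z ∂ν) + lam • ∫ z, z ∂νinf)
      ≤ h (∫ z, z ∂ν) + hinf (lam • ∫ z, z ∂νinf) :=
        aux_shift h hconv hinf hrec _ _
    _ = h (∫ z, z ∂ν) + lam * hinf (∫ z, z ∂νinf) := by
        rw [aux_homog h hinf hrec lam hlam]
    _ ≤ (∫ z, h z ∂ν) + lam * ∫ z, hinf z ∂νinf := by
        have := mul_le_mul_of_nonneg_left jensen2 hlam
        linarith [jensen1]
end
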